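/- Fix integers K ≥ 1, L ≥ 1, a real observation X, a standard deviation s > 0, grid values σ_1, …, σ_K > 0, mixture weights π_0, …, π_K ≥ 0 with Σ_{k=0}^K π_k = 1, and reals ω_1, …, ω_L. Let g(θ) = π_0 δ_0(θ) + Σ_{k=1}^K π_k (1/σ_k)φ(θ/σ_k) and f(z) = φ(z) + Σ_{l=1}^L ω_l (1/√(l!)) φ^{(l)}(z). Then the marginal density π_0 · (1/s) f(X/s) + Σ_{k=1}^K π_k ∫_ℝ (1/σ_k)φ(θ/σ_k) · (1/s) f((X − θ)/s) dθ equals Σ_{k=0}^K π_k ( p_{k0} + Σ_{l=1}^L ω_l p_{kl} ), where p_{kl} = (s^l / (σ_k² + s²)^{(l+1)/2}) · (1/√(l!)) · φ^{(l)}(X / √(σ_k² + s²)) and σ_0 = 0. -/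

import Mathlib

open MeasureTheory Real

/-- The standard Gaussian density `φ`. -/
noncomputable def phi (x : ℝ) : ℝ := (Real.sqrt (2 * Real.pi))⁻¹ * Real.exp (-x ^ 2 / 2)

/-- The `l`-th derivative `φ^{(l)}` of the standard Gaussian density (`φ^{(0)} = φ`). -/
noncomputable def phiD (l : ℕ) : ℝ → ℝ := iteratedDeriv l phi

section AuxMarginal
open Filter

lemma phi_def' : phi = fun x => (Real.sqrt (2 * Real.pi))⁻¹ * Real.exp (-(x ^ 2 / 2)) := by
  funext x; rw [phi, neg_div]

lemma gauss_contDiff : ContDiff ℝ ⊤ (fun y : ℝ => Real.exp (-(y ^ 2 / 2))) :=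
  Real.contDiff_exp.comp (((contDiff_id.pow 2).div_const 2).neg)

lemma phi_contDiff : ContDiff ℝ ⊤ phi := by
  rw [phi_def']; exact contDiff_const.mul gauss_contDiff

lemma iter_const_mul (c : ℝ) (g : ℝ → ℝ) (l : ℕ) :
    deriv^[l] (fun x => c * g x) = fun x => c * deriv^[l] g x := by
  induction l with
  | zero => rfl
  | succ n ih =>
    funext x
    rw [Function.iterate_succ_apply', Function.iterate_succ_apply', ih,
      deriv_const_mul_field]

lemma phiD_eq (l : ℕ) (x : ℝ) :
    phiD l x = (Real.sqrt (2 * Real.pi))⁻¹ *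
      ((-1 : ℝ) ^ l * Polynomial.aeval x (Polynomial.hermite l) * Real.exp (-(x ^ 2 / 2))) := by
  rw [phiD, phi_def', iteratedDeriv_eq_iterate, iter_const_mul]
  simp only [Polynomial.deriv_gaussian_eq_hermite_mul_gaussian]

lemma phiD_hasDerivAt (l : ℕ) (x : ℝ) : HasDerivAt (phiD l) (phiD (l + 1) x) x := by
  have hd : Differentiable ℝ (iteratedDeriv l phi) :=
    phi_contDiff.differentiable_iteratedDeriv l (by exact Batteries.compareOfLessAndEq_eq_lt.mp rfl)
  have := (hd x).hasDerivAt
  rwa [show deriv (iteratedDeriv l phi) x = phiD (l + 1) x by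
    rw [phiD, iteratedDeriv_succ]] at this

lemma phiD_continuous (l : ℕ) : Continuous (phiD l) := by
  have h : Differentiable ℝ (phiD l) := fun x => (phiD_hasDerivAt l x).differentiableAt
  exact h.continuous

lemma pow_gauss_tendsto_atTop (n : ℕ) :
    Tendsto (fun x : ℝ => x ^ n * Real.exp (-(x ^ 2 / 2))) atTop (nhds 0) := by
  apply squeeze_zero' (g := fun x : ℝ => x ^ n * Real.exp (-x))
  · filter_upwards [eventually_ge_atTop (0 : ℝ)] with x hx
    positivity
  · filter_upwards [eventually_ge_atTop (2 : ℝ)] with x hx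
    have h0 : (0:ℝ) ≤ x := by linarith
    have : x ≤ x ^ 2 / 2 := by nlinarith
    exact mul_le_mul_of_nonneg_left (Real.exp_le_exp.2 (by linarith)) (pow_nonneg h0 n)
  · exact tendsto_pow_mul_exp_neg_atTop_nhds_zero n

lemma poly_gauss_tendsto_atTop (p : Polynomial ℝ) :
    Tendsto (fun x : ℝ => Polynomial.eval x p * Real.exp (-(x ^ 2 / 2))) atTop (nhds 0) := by
  have : (fun x : ℝ => Polynomial.eval x p * Real.exp (-(x ^ 2 / 2))) =
      fun x => ∑ i ∈ Finset.range (p.natDegree + 1),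
        p.coeff i * (x ^ i * Real.exp (-(x ^ 2 / 2))) := by
    funext x
    rw [Polynomial.eval_eq_sum_range, Finset.sum_mul]
    exact Finset.sum_congr rfl fun i _ => by ring
  rw [this]
  have := tendsto_finset_sum (Finset.range (p.natDegree + 1))
    (fun i _ => ((pow_gauss_tendsto_atTop i).const_mul (p.coeff i)))
  simpa using this

lemma poly_gauss_tendsto_atBot (p : Polynomial ℝ) :
    Tendsto (fun x : ℝ => Polynomial.eval x p * Real.exp (-(x ^ 2 / 2))) atBot (nhds 0) := by
  have h := (poly_gauss_tendsto_atTop (p.comp (-Polynomial.X))).comp tendsto_neg_atBot_atTop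
  have : ((fun x : ℝ => Polynomial.eval x (p.comp (-Polynomial.X)) *
      Real.exp (-(x ^ 2 / 2))) ∘ (fun x : ℝ => -x)) =
      fun x : ℝ => Polynomial.eval x p * Real.exp (-(x ^ 2 / 2)) := by
    funext x; simp [Polynomial.eval_comp, neg_sq]
  rwa [this] at h

lemma phiD_bounded (l : ℕ) : ∃ C : ℝ, 0 ≤ C ∧ ∀ x, |phiD l x| ≤ C := by
  have hcoc : Tendsto (phiD l) (cocompact ℝ) (nhds 0) := by
    rw [cocompact_eq_atBot_atTop, tendsto_sup]
    have heq : phiD l = fun x => Polynomial.eval x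
        (Polynomial.C ((Real.sqrt (2 * Real.pi))⁻¹ * (-1 : ℝ) ^ l) *
          (Polynomial.hermite l).map (algebraMap ℤ ℝ)) * Real.exp (-(x ^ 2 / 2)) := by
      funext x
      rw [phiD_eq]
      simp [Polynomial.aeval_def, Polynomial.eval₂_eq_eval_map]
      ring
    constructor
    · rw [heq]; exact poly_gauss_tendsto_atBot _
    · rw [heq]; exact poly_gauss_tendsto_atTop _
  set Z : ZeroAtInftyContinuousMap ℝ ℝ :=
    ⟨⟨phiD l, phiD_continuous l⟩, hcoc⟩ with hZ
  obtain ⟨C, hC⟩ := isBounded_iff_forall_norm_le.1 Z.isBounded_range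
  refine ⟨C, le_trans (norm_nonneg (phiD l 0)) (hC _ ⟨0, rfl⟩), fun x => ?_⟩
  simpa [Real.norm_eq_abs] using hC (phiD l x) ⟨x, rfl⟩

lemma integrable_phi_comp {σ : ℝ} (hσ : 0 < σ) :
    Integrable (fun θ : ℝ => phi (θ / σ)) := by
  have hb : (0:ℝ) < 1/(2*σ^2) := by positivity
  have h := (integrable_exp_neg_mul_sq hb).const_mul (Real.sqrt (2 * Real.pi))⁻¹
  refine h.congr (Eventually.of_forall fun θ => ?_)
  rw [phi_def']
  simp only
  congr 1
  rw [div_pow]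
  have hσ2 : σ ^ 2 ≠ 0 := by positivity
  field_simp

lemma integrable_kernel {σ s : ℝ} (hσ : 0 < σ) (hs : 0 < s) (l : ℕ) (X : ℝ) :
    Integrable (fun θ : ℝ => 1/σ * phi (θ/σ) * (1/s * phiD l ((X-θ)/s))) := by
  obtain ⟨C, hC0, hC⟩ := phiD_bounded l
  have hg : Integrable (fun θ : ℝ => 1/σ * phi (θ/σ)) :=
    (integrable_phi_comp hσ).const_mul _
  have hcont : Continuous (fun θ : ℝ => 1/s * phiD l ((X - θ)/s)) := by
    have : Continuous fun θ : ℝ => (X - θ)/s := by fun_prop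
    exact continuous_const.mul ((phiD_continuous l).comp this)
  have h := hg.bdd_mul hcont.aestronglyMeasurable (c := 1/s * C)
    (Eventually.of_forall fun θ => by
      have := hC ((X - θ)/s)
      simp only [norm_mul, Real.norm_eq_abs]
      rw [abs_of_pos (by positivity : (0:ℝ) < 1/s)]
      exact mul_le_mul_of_nonneg_left this (by positivity))
  refine h.congr (Eventually.of_forall fun θ => ?_)
  ring


lemma conv_zero {σ s : ℝ} (hσ : 0 < σ) (hs : 0 < s) (X : ℝ) :
    ∫ θ : ℝ, 1/σ * phi (θ/σ) * (1/s * phi ((X-θ)/s)) =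
      1 / Real.sqrt (σ^2 + s^2) * phi (X / Real.sqrt (σ^2 + s^2)) := by
  have hss : (0:ℝ) < σ^2 + s^2 := by positivity
  have hτ : 0 < Real.sqrt (σ^2 + s^2) := Real.sqrt_pos.2 hss
  have hτ2 : Real.sqrt (σ^2 + s^2) ^ 2 = σ^2 + s^2 := Real.sq_sqrt hss.le
  have h2π : (0:ℝ) < Real.sqrt (2 * Real.pi) := Real.sqrt_pos.2 (by positivity)
  set b : ℝ := (σ^2 + s^2)/(2*σ^2*s^2) with hbdef
  have hb : 0 < b := by positivity
  set c : ℝ := σ^2*X/(σ^2+s^2) with hcdef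
  set c₀ : ℝ := (Real.sqrt (2 * Real.pi))⁻¹ with hc0def
  set C : ℝ := 1/σ * (1/s) * c₀^2 * Real.exp (-(X^2/(2*(σ^2+s^2)))) with hCdef
  have key : ∀ θ : ℝ, 1/σ * phi (θ/σ) * (1/s * phi ((X-θ)/s)) = C * Real.exp (-b*(θ-c)^2) := by
    intro θ
    have hexp : Real.exp (-((θ/σ)^2/2)) * Real.exp (-(((X-θ)/s)^2/2)) =
        Real.exp (-(X^2/(2*(σ^2+s^2)))) * Real.exp (-b*(θ-c)^2) := by
      rw [← Real.exp_add, ← Real.exp_add]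
      congr 1
      rw [hbdef, hcdef]
      field_simp
      ring
    rw [phi_def']
    simp only [← hc0def]
    calc 1/σ * (c₀ * Real.exp (-((θ/σ)^2/2))) * (1/s * (c₀ * Real.exp (-(((X-θ)/s)^2/2))))
        = 1/σ * (1/s) * c₀^2 * (Real.exp (-((θ/σ)^2/2)) * Real.exp (-(((X-θ)/s)^2/2))) := by ring
      _ = 1/σ * (1/s) * c₀^2 * (Real.exp (-(X^2/(2*(σ^2+s^2)))) * Real.exp (-b*(θ-c)^2)) := by
          rw [hexp]
      _ = C * Real.exp (-b*(θ-c)^2) := by rw [hCdef]; ring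
  have h1 : Real.pi / b = (Real.sqrt (2*Real.pi) * σ * s / Real.sqrt (σ^2+s^2))^2 := by
    have : (Real.sqrt (2*Real.pi) * σ * s / Real.sqrt (σ^2+s^2))^2
        = (2*Real.pi) * σ^2 * s^2 / (σ^2+s^2) := by
      rw [div_pow, mul_pow, mul_pow, Real.sq_sqrt (by positivity : (0:ℝ) ≤ 2*Real.pi), hτ2]
    rw [this, hbdef]
    field_simp
  have h2 : Real.sqrt (Real.pi / b) = Real.sqrt (2*Real.pi) * σ * s / Real.sqrt (σ^2+s^2) := by
    rw [h1, Real.sqrt_sq (by positivity)]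
  have hX : (X / Real.sqrt (σ^2+s^2))^2/2 = X^2/(2*(σ^2+s^2)) := by
    rw [div_pow, hτ2]; field_simp
  calc ∫ θ : ℝ, 1/σ * phi (θ/σ) * (1/s * phi ((X-θ)/s))
      = ∫ θ : ℝ, C * Real.exp (-b*(θ-c)^2) := integral_congr_ae (Eventually.of_forall key)
    _ = C * ∫ θ : ℝ, Real.exp (-b*(θ-c)^2) := integral_const_mul _ _
    _ = C * ∫ θ : ℝ, Real.exp (-b*θ^2) := by
        rw [integral_sub_right_eq_self (fun θ : ℝ => Real.exp (-b*θ^2)) c]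
    _ = C * Real.sqrt (Real.pi / b) := by rw [integral_gaussian]
    _ = 1 / Real.sqrt (σ^2 + s^2) * phi (X / Real.sqrt (σ^2 + s^2)) := by
        rw [h2, phi_def']
        simp only
        rw [hX, hCdef, hc0def]
        have hτ' : Real.sqrt (σ^2+s^2) ≠ 0 := hτ.ne'
        field_simp


lemma phi_nonneg (x : ℝ) : 0 ≤ phi x := by
  rw [phi_def']
  positivity

lemma conv_phiD {σ s : ℝ} (hσ : 0 < σ) (hs : 0 < s) (l : ℕ) (X : ℝ) :
    ∫ θ : ℝ, 1/σ * phi (θ/σ) * (1/s * phiD l ((X-θ)/s)) =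
      s^l / (Real.sqrt (σ^2+s^2))^(l+1) * phiD l (X / Real.sqrt (σ^2+s^2)) := by
  induction l generalizing X with
  | zero =>
    simpa [phiD, iteratedDeriv_zero] using conv_zero hσ hs X
  | succ l ih =>
    obtain ⟨C, hC0, hC⟩ := phiD_bounded (l+1)
    have hss : (0:ℝ) < σ^2 + s^2 := by positivity
    have hτ : 0 < Real.sqrt (σ^2 + s^2) := Real.sqrt_pos.2 hss
    have hcontker : ∀ x : ℝ, Continuous (fun θ : ℝ => 1/σ * phi (θ/σ) * (1/s * phiD l ((x-θ)/s))) := by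
      intro x
      have h1 : Continuous fun θ : ℝ => θ / σ := by fun_prop
      have h2 : Continuous fun θ : ℝ => (x - θ)/s := by fun_prop
      have hphi : Continuous phi := phiD_continuous 0 |>.congr (fun y => by rw [phiD, iteratedDeriv_zero])
      exact (continuous_const.mul (hphi.comp h1)).mul
        (continuous_const.mul ((phiD_continuous l).comp h2))
    have hcontker' : Continuous (fun θ : ℝ => 1/σ * phi (θ/σ) * (1/s * (1/s * phiD (l+1) ((X-θ)/s)))) := by
      have h1 : Continuous fun θ : ℝ => θ / σ := by fun_prop
      have h2 : Continuous fun θ : ℝ => (X - θ)/s := by fun_prop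
      have hphi : Continuous phi := phiD_continuous 0 |>.congr (fun y => by rw [phiD, iteratedDeriv_zero])
      exact (continuous_const.mul (hphi.comp h1)).mul
        (continuous_const.mul (continuous_const.mul ((phiD_continuous (l+1)).comp h2)))
    have hders : ∀ (x θ : ℝ), HasDerivAt (fun y => 1/σ * phi (θ/σ) * (1/s * phiD l ((y-θ)/s)))
        (1/σ * phi (θ/σ) * (1/s * (1/s * phiD (l+1) ((x-θ)/s)))) x := by
      intro x θ
      have hinner : HasDerivAt (fun y : ℝ => (y - θ)/s) (1/s) x :=
        ((hasDerivAt_id x).sub_const θ).div_const s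
      have houter : HasDerivAt (fun y : ℝ => phiD l ((y-θ)/s))
          (phiD (l+1) ((x-θ)/s) * (1/s)) x :=
        (phiD_hasDerivAt l ((x-θ)/s)).comp x hinner
      have h3 := (houter.const_mul (1/s)).const_mul (1/σ * phi (θ/σ))
      exact h3.congr_deriv (by ring)
    have key := hasDerivAt_integral_of_dominated_loc_of_deriv_le (μ := volume)
      (F := fun x θ => 1/σ * phi (θ/σ) * (1/s * phiD l ((x-θ)/s)))
      (F' := fun x θ => 1/σ * phi (θ/σ) * (1/s * (1/s * phiD (l+1) ((x-θ)/s))))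
      (bound := fun θ => 1/σ * phi (θ/σ) * (1/s * (1/s * C)))
      (x₀ := X) (s := Metric.ball X 1) (Metric.ball_mem_nhds X one_pos)
      (Eventually.of_forall fun x => (hcontker x).aestronglyMeasurable)
      (integrable_kernel hσ hs l X)
      hcontker'.aestronglyMeasurable
      (Eventually.of_forall fun θ => fun x _ => by
        have h1 : (0:ℝ) ≤ 1/σ * phi (θ/σ) := by
          have := phi_nonneg (θ/σ); positivity
        have h2 : |1/s * (1/s * phiD (l+1) ((x-θ)/s))| ≤ 1/s * (1/s * C) := by
          rw [abs_mul, abs_mul, abs_of_pos (by positivity : (0:ℝ) < 1/s)]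
          gcongr
          exact hC _
        calc ‖1/σ * phi (θ/σ) * (1/s * (1/s * phiD (l+1) ((x-θ)/s)))‖
            = 1/σ * phi (θ/σ) * |1/s * (1/s * phiD (l+1) ((x-θ)/s))| := by
              rw [Real.norm_eq_abs, abs_mul, abs_of_nonneg h1]
          _ ≤ 1/σ * phi (θ/σ) * (1/s * (1/s * C)) := mul_le_mul_of_nonneg_left h2 h1)
      (((integrable_phi_comp hσ).const_mul (1/σ)).mul_const (1/s * (1/s * C)))
      (Eventually.of_forall fun θ => fun x _ => hders x θ)
    have hG1 : HasDerivAt (fun x : ℝ => ∫ θ : ℝ, 1/σ * phi (θ/σ) * (1/s * phiD l ((x-θ)/s)))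
        (∫ θ : ℝ, 1/σ * phi (θ/σ) * (1/s * (1/s * phiD (l+1) ((X-θ)/s)))) X := key.2
    have hfunext : (fun x : ℝ => ∫ θ : ℝ, 1/σ * phi (θ/σ) * (1/s * phiD l ((x-θ)/s))) =
        fun x : ℝ => s^l / (Real.sqrt (σ^2+s^2))^(l+1) * phiD l (x / Real.sqrt (σ^2+s^2)) :=
      funext fun x => ih x
    rw [hfunext] at hG1
    have hG2 : HasDerivAt
        (fun x : ℝ => s^l / (Real.sqrt (σ^2+s^2))^(l+1) * phiD l (x / Real.sqrt (σ^2+s^2)))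
        (s^l / (Real.sqrt (σ^2+s^2))^(l+1) *
          (phiD (l+1) (X / Real.sqrt (σ^2+s^2)) * (1 / Real.sqrt (σ^2+s^2)))) X := by
      have hinner : HasDerivAt (fun x : ℝ => x / Real.sqrt (σ^2+s^2))
          (1 / Real.sqrt (σ^2+s^2)) X := (hasDerivAt_id X).div_const _
      exact ((phiD_hasDerivAt l (X / Real.sqrt (σ^2+s^2))).comp X hinner).const_mul _
    have huniq := hG1.unique hG2
    have hsplit : (fun θ : ℝ => 1/σ * phi (θ/σ) * (1/s * (1/s * phiD (l+1) ((X-θ)/s)))) =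
        fun θ : ℝ => (1/s) * (1/σ * phi (θ/σ) * (1/s * phiD (l+1) ((X-θ)/s))) :=
      funext fun θ => by ring
    rw [hsplit, integral_const_mul] at huniq
    have hs' : s ≠ 0 := hs.ne'
    have hτ' : Real.sqrt (σ^2+s^2) ≠ 0 := hτ.ne'
    have := congrArg (fun t => s * t) huniq
    rw [← mul_assoc, mul_one_div, div_self hs', one_mul] at this
    rw [this]
    rw [pow_succ, pow_succ]
    field_simp
    ring


lemma phiD_zero_eq : phiD 0 = phi := by
  rw [phiD, iteratedDeriv_zero]

lemma integral_f {σ s : ℝ} (hσ : 0 < σ) (hs : 0 < s) (X : ℝ) (L : ℕ) (ω : ℕ → ℝ) :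
    ∫ θ : ℝ, 1/σ * phi (θ/σ) * (1/s * (phi ((X-θ)/s) +
        ∑ l ∈ Finset.Icc 1 L, ω l * (1 / Real.sqrt (Nat.factorial l)) * phiD l ((X-θ)/s))) =
      1/Real.sqrt (σ^2+s^2) * phi (X/Real.sqrt (σ^2+s^2)) +
        ∑ l ∈ Finset.Icc 1 L, ω l * (1 / Real.sqrt (Nat.factorial l)) *
          (s^l/(Real.sqrt (σ^2+s^2))^(l+1) * phiD l (X/Real.sqrt (σ^2+s^2))) := by
  have hg : ∀ l : ℕ, Integrable (fun θ : ℝ => 1/σ * phi (θ/σ) * (1/s * phiD l ((X-θ)/s))) :=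
    fun l => integrable_kernel hσ hs l X
  have hg0 : Integrable (fun θ : ℝ => 1/σ * phi (θ/σ) * (1/s * phi ((X-θ)/s))) := by
    have := hg 0
    simpa [phiD_zero_eq] using this
  have expand : ∀ θ : ℝ, 1/σ * phi (θ/σ) * (1/s * (phi ((X-θ)/s) +
      ∑ l ∈ Finset.Icc 1 L, ω l * (1 / Real.sqrt (Nat.factorial l)) * phiD l ((X-θ)/s))) =
      1/σ * phi (θ/σ) * (1/s * phi ((X-θ)/s)) +
      ∑ l ∈ Finset.Icc 1 L, (ω l * (1 / Real.sqrt (Nat.factorial l))) *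
        (1/σ * phi (θ/σ) * (1/s * phiD l ((X-θ)/s))) := by
    intro θ
    rw [mul_add, mul_add, Finset.mul_sum, Finset.mul_sum]
    congr 1
    exact Finset.sum_congr rfl fun l _ => by ring
  rw [integral_congr_ae (Eventually.of_forall expand),
    integral_add hg0 (integrable_finset_sum _ (fun l _ => (hg l).const_mul _)),
    integral_finset_sum _ (fun l _ => (hg l).const_mul _), conv_zero hσ hs X]
  congr 1
  refine Finset.sum_congr rfl fun l _ => ?_
  rw [integral_const_mul, conv_phiD hσ hs l X]

lemma sum_range_split (K : ℕ) (h : ℕ → ℝ) :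
    ∑ k ∈ Finset.range (K + 1), h k = h 0 + ∑ k ∈ Finset.Icc 1 K, h k := by
  rw [Finset.sum_range_succ', ← Finset.Ico_add_one_right_eq_Icc, Finset.sum_Ico_eq_sum_range]
  simp [add_comm]



end AuxMarginal

/-- Theorem 1 of the paper: the marginal density of one observation `X = θ + s Z` under the
prior `g = π₀ δ₀ + Σₖ πₖ N(0, σₖ²)` and correlated noise density
`f = φ + Σₗ ωₗ (1/√l!) φ^{(l)}`, where the point mass `δ₀` contributes `π₀ (1/s) f(X/s)`,
equals `Σₖ πₖ (p_{k0} + Σₗ ωₗ p_{kl})` with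
`p_{kl} = s^l/(σₖ²+s²)^{(l+1)/2} (1/√l!) φ^{(l)}(X/√(σₖ²+s²))` and `σ₀ = 0`. -/
theorem marginal_density_correlated_noise (K L : ℕ) (hK : 1 ≤ K) (hL : 1 ≤ L)
    (X s : ℝ) (hs : 0 < s)
    (σ : ℕ → ℝ) (hσ0 : σ 0 = 0) (hσpos : ∀ k, 1 ≤ k → k ≤ K → 0 < σ k)
    (pr : ℕ → ℝ) (hpr : ∀ k, k ≤ K → 0 ≤ pr k)
    (hsum : ∑ k ∈ Finset.range (K + 1), pr k = 1)
    (ω : ℕ → ℝ) :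
    let f : ℝ → ℝ := fun z =>
      phi z + ∑ l ∈ Finset.Icc 1 L, ω l * (1 / Real.sqrt (Nat.factorial l)) * phiD l z
    let p : ℕ → ℕ → ℝ := fun k l =>
      s ^ l / (Real.sqrt (σ k ^ 2 + s ^ 2)) ^ (l + 1) * (1 / Real.sqrt (Nat.factorial l)) *
        phiD l (X / Real.sqrt (σ k ^ 2 + s ^ 2))
    pr 0 * ((1 / s) * f (X / s)) +
        ∑ k ∈ Finset.Icc 1 K,
          pr k * ∫ θ : ℝ, (1 / σ k) * phi (θ / σ k) * ((1 / s) * f ((X - θ) / s)) =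
      ∑ k ∈ Finset.range (K + 1),
        pr k * (p k 0 + ∑ l ∈ Finset.Icc 1 L, ω l * p k l) := by
  intro f p
  have hf : ∀ z, f z = phi z + ∑ l ∈ Finset.Icc 1 L,
      ω l * (1 / Real.sqrt (Nat.factorial l)) * phiD l z := fun z => rfl
  have hp : ∀ k l, p k l = s ^ l / (Real.sqrt (σ k ^ 2 + s ^ 2)) ^ (l + 1) *
      (1 / Real.sqrt (Nat.factorial l)) * phiD l (X / Real.sqrt (σ k ^ 2 + s ^ 2)) :=
    fun k l => rfl
  have hs0 : Real.sqrt (σ 0 ^ 2 + s ^ 2) = s := by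
    rw [hσ0]
    simpa using Real.sqrt_sq hs.le
  have hs' : s ≠ 0 := hs.ne'
  have hk0 : (1 / s) * f (X / s) = p 0 0 + ∑ l ∈ Finset.Icc 1 L, ω l * p 0 l := by
    have hpl : ∀ l : ℕ, p 0 l = 1/s * ((1 / Real.sqrt (Nat.factorial l)) * phiD l (X/s)) := by
      intro l
      rw [hp, hs0]
      have hsl : s ^ l ≠ 0 := pow_ne_zero l hs'
      rw [pow_succ]
      field_simp
    rw [hf, mul_add, Finset.mul_sum]
    congr 1
    · rw [hpl 0, phiD_zero_eq]
      simp
    · refine Finset.sum_congr rfl fun l _ => ?_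
      rw [hpl l]
      ring
  have hk : ∀ k ∈ Finset.Icc 1 K,
      pr k * ∫ θ : ℝ, (1 / σ k) * phi (θ / σ k) * ((1 / s) * f ((X - θ) / s)) =
      pr k * (p k 0 + ∑ l ∈ Finset.Icc 1 L, ω l * p k l) := by
    intro k hkm
    obtain ⟨hk1, hk2⟩ := Finset.mem_Icc.mp hkm
    have hσk : 0 < σ k := hσpos k hk1 hk2
    congr 1
    have hI := integral_f hσk hs X L ω
    have hintg : (∫ θ : ℝ, (1 / σ k) * phi (θ / σ k) * ((1 / s) * f ((X - θ) / s))) =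
        1/Real.sqrt (σ k ^2+s^2) * phi (X/Real.sqrt (σ k ^2+s^2)) +
        ∑ l ∈ Finset.Icc 1 L, ω l * (1 / Real.sqrt (Nat.factorial l)) *
          (s^l/(Real.sqrt (σ k ^2+s^2))^(l+1) * phiD l (X/Real.sqrt (σ k ^2+s^2))) := by
      rw [← hI]
    rw [hintg]
    congr 1
    · rw [hp, phiD_zero_eq]
      simp
    · refine Finset.sum_congr rfl fun l _ => ?_
      rw [hp]
      ring
  rw [sum_range_split K (fun k => pr k * (p k 0 + ∑ l ∈ Finset.Icc 1 L, ω l * p k l)), hk0]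
  congr 1
  exact Finset.sum_congr rfl hk
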